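/- Let α, β, χ ∈ ℂ and suppose the 3×3 complex matrix with rows (1, α, χ), (conj(α), 1, β), (conj(χ), conj(β), 1) is positive semidefinite. Then |χ − αβ|² ≤ (1 − |α|²)(1 − |β|²). -/

import Mathlib

open scoped ComplexOrder

theorem stmt_4 (α β χ : ℂ)
    (h : (!![1, α, χ;
             (starRingEnd ℂ) α, 1, β;
             (starRingEnd ℂ) χ, (starRingEnd ℂ) β, 1] :
          Matrix (Fin 3) (Fin 3) ℂ).PosSemidef) :
    ‖χ - α * β‖ ^ 2 ≤
      (1 - ‖α‖ ^ 2) * (1 - ‖β‖ ^ 2) := by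
  have hd : (0:ℂ) ≤ (!![1, α, χ;
             (starRingEnd ℂ) α, 1, β;
             (starRingEnd ℂ) χ, (starRingEnd ℂ) β, 1] :
          Matrix (Fin 3) (Fin 3) ℂ).det := by
    rw [h.isHermitian.det_eq_prod_eigenvalues]
    have : ∀ i, (0:ℝ) ≤ h.isHermitian.eigenvalues i := fun i => h.eigenvalues_nonneg i
    exact Finset.prod_nonneg fun i _ => RCLike.ofReal_nonneg.mpr (this i)
  simp only [Matrix.det_fin_three, Matrix.of_apply, Matrix.cons_val', Matrix.cons_val_zero,
    Matrix.cons_val_one, Matrix.head_cons, Matrix.empty_val', Matrix.cons_val_fin_one,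
    Matrix.cons_val_two, Matrix.tail_cons, Matrix.head_fin_const] at hd
  rw [Complex.le_def] at hd
  obtain ⟨hre, -⟩ := hd
  simp only [Complex.zero_re, Complex.add_re, Complex.sub_re, Complex.mul_re, Complex.mul_im,
    Complex.one_re, Complex.one_im, Complex.conj_re, Complex.conj_im] at hre
  rw [Complex.sq_norm, Complex.sq_norm, Complex.sq_norm, Complex.normSq_apply, Complex.normSq_apply,
    Complex.normSq_apply]
  simp only [Complex.sub_re, Complex.sub_im, Complex.mul_re, Complex.mul_im]
  nlinarith [hre]
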